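/- Let α be a nonnegative random variable taking values in [0,H) (0 < H ≤ ∞) with continuous distribution function F, survival function F̄ = 1 - F, F̄(x) > 0 for x < H, and finite mean Eα > c > 0. Define L(x) := m(x) - c/F̄(x) - x/n, where m is the mean residual demand function and n ≥ 1. Then L(0) = Eα - c > 0 and lim_{x → H^-} L(x) = -∞, and consequently there exists x ∈ (0,H) with L(x) = 0; i.e., a symmetric pure Nash equilibrium exists. -/

import Mathlib

open MeasureTheory Set Filter Function Topology

noncomputable section

/-- The mean residual demand (MRD) function `m(x) = (1/F̄(x)) ∫_x^H F̄(u) du`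
(the survival function vanishes beyond `H`, so the integral may be taken over `(x,∞)`). -/
def mrd (F : ℝ → ℝ) (x : ℝ) : ℝ :=
  (∫ u in Ioi x, (1 - F u)) / (1 - F x)

/-- The function `L(x) = m(x) - c/F̄(x) - x/n`. -/
def Lfun (F : ℝ → ℝ) (c : ℝ) (n : ℕ) (x : ℝ) : ℝ :=
  mrd F x - c / (1 - F x) - x / n

/-- `L(0) = Eα - c > 0`, `L(x) → -∞` as `x → H⁻`, and consequently `L` has a zero in
`(0,H)`, i.e., a symmetric pure Nash equilibrium exists. -/
theorem stmt2 {Ω : Type*} [MeasurableSpace Ω] (μ : Measure Ω) [IsProbabilityMeasure μ]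
    (α : Ω → ℝ) (hαmeas : Measurable α)
    (H : EReal) (hH : 0 < H)
    (hval : ∀ᵐ ω ∂μ, 0 ≤ α ω ∧ (α ω : EReal) < H)
    (hαint : Integrable α μ)
    (F : ℝ → ℝ)
    (hF : ∀ x : ℝ, F x = (μ {ω | α ω ≤ x}).toReal)
    (hFcont : Continuous F)
    (hFbar : ∀ x : ℝ, 0 ≤ x → (x : EReal) < H → 0 < 1 - F x)
    (c : ℝ) (hc : 0 < c) (hcE : c < ∫ ω, α ω ∂μ)
    (n : ℕ) (hn : 1 ≤ n) :
    Lfun F c n 0 = (∫ ω, α ω ∂μ) - c ∧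
      0 < Lfun F c n 0 ∧
      Tendsto (Lfun F c n) (Filter.comap (fun x : ℝ => (x : EReal)) (𝓝[<] H)) atBot ∧
      ∃ x : ℝ, 0 < x ∧ (x : EReal) < H ∧ Lfun F c n x = 0 := by
  have hval0 : ∀ᵐ ω ∂μ, 0 ≤ α ω := hval.mono fun ω h => h.1
  have hvalH : ∀ᵐ ω ∂μ, (α ω : EReal) < H := hval.mono fun ω h => h.2
  have hmeasle : ∀ x : ℝ, MeasurableSet {ω | α ω ≤ x} := fun x => hαmeas measurableSet_Iic
  -- survival function representation
  have hsurv : ∀ x : ℝ, 1 - F x = (μ {ω | x < α ω}).toReal := by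
    intro x
    have hcpl : {ω | x < α ω} = {ω | α ω ≤ x}ᶜ := by ext ω; simp [not_le]
    rw [hF, hcpl, prob_compl_eq_one_sub (hmeasle x),
      ENNReal.toReal_sub_of_le prob_le_one ENNReal.one_ne_top, ENNReal.toReal_one]
  have hGnn : ∀ x : ℝ, 0 ≤ 1 - F x := fun x => by rw [hsurv]; positivity
  -- F vanishes at nonpositive reals
  have hFneg : ∀ x : ℝ, x < 0 → F x = 0 := by
    intro x hx
    have h0 : μ {ω | α ω ≤ x} = 0 := by
      refine measure_mono_null (fun ω hω => ?_) (ae_iff.mp hval0)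
      simp only [mem_setOf_eq] at *
      linarith
    rw [hF, h0, ENNReal.toReal_zero]
  have hF0 : F 0 = 0 := by
    have h1 : Tendsto F (𝓝[<] (0:ℝ)) (𝓝 (F 0)) :=
      (hFcont.tendsto 0).mono_left nhdsWithin_le_nhds
    have h2 : Tendsto F (𝓝[<] (0:ℝ)) (𝓝 0) := by
      refine Tendsto.congr' ?_ tendsto_const_nhds
      filter_upwards [self_mem_nhdsWithin] with x hx using (hFneg x hx).symm
    exact tendsto_nhds_unique h1 h2
  -- monotonicity of F
  have hFmono : Monotone F := by
    intro a b hab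
    rw [hF, hF]
    exact ENNReal.toReal_mono (measure_ne_top μ _)
      (measure_mono fun ω hω => le_trans hω hab)
  -- layer cake
  have hlayer : (∫ ω, α ω ∂μ) = ∫ t in Ioi (0:ℝ), (1 - F t) := by
    rw [hαint.integral_eq_integral_meas_lt hval0]
    refine setIntegral_congr_fun measurableSet_Ioi (fun t _ => ?_)
    exact (hsurv t).symm
  -- integrability of the survival function on (0,∞)
  have hGmeas : Measurable fun t : ℝ => 1 - F t := (continuous_const.sub hFcont).measurable
  have hGint : IntegrableOn (fun t : ℝ => 1 - F t) (Ioi 0) := by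
    refine ⟨hGmeas.aestronglyMeasurable.restrict, ?_⟩
    rw [hasFiniteIntegral_iff_ofReal (Eventually.of_forall fun t => hGnn t)]
    have hkey := lintegral_eq_lintegral_meas_lt μ hval0 hαmeas.aemeasurable
    have hcongr : ∫⁻ t in Ioi (0:ℝ), ENNReal.ofReal (1 - F t)
        = ∫⁻ t in Ioi (0:ℝ), μ {a | t < α a} := by
      refine setLIntegral_congr_fun measurableSet_Ioi (fun t _ => ?_)
      rw [hsurv t, ENNReal.ofReal_toReal (measure_ne_top μ _)]
    rw [hcongr, ← hkey]
    exact hαint.lintegral_lt_top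
  -- splitting the tail integral
  have hTx : ∀ x : ℝ, 0 ≤ x →
      (∫ u in Ioi x, (1 - F u)) = (∫ u in Ioi (0:ℝ), (1 - F u)) - ∫ u in (0:ℝ)..x, (1 - F u) := by
    intro x hx
    have hsplit : (∫ u in Ioi (0:ℝ), (1 - F u))
        = (∫ u in Ioc (0:ℝ) x, (1 - F u)) + ∫ u in Ioi x, (1 - F u) := by
      rw [← setIntegral_union (Ioc_disjoint_Ioi le_rfl) measurableSet_Ioi
        (hGint.mono_set Ioc_subset_Ioi_self) (hGint.mono_set (Ioi_subset_Ioi hx)),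
        Ioc_union_Ioi_eq_Ioi hx]
    rw [intervalIntegral.integral_of_le hx]
    linarith [hsplit]
  -- rewriting L
  have hLformula : ∀ x : ℝ, Lfun F c n x
      = ((∫ u in Ioi x, (1 - F u)) - c) / (1 - F x) - x / n := by
    intro x
    simp only [Lfun, mrd, sub_div]
  -- L(0)
  have hL0 : Lfun F c n 0 = (∫ ω, α ω ∂μ) - c := by
    rw [hLformula 0, hF0, hlayer]
    norm_num
  have hL0pos : 0 < Lfun F c n 0 := by rw [hL0]; linarith
  have hnpos : (0:ℝ) < (n : ℝ) := by
    exact_mod_cast Nat.lt_of_lt_of_le Nat.zero_lt_one hn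
  -- continuity of L on [0,b] for b < H
  have hprim : Continuous fun x : ℝ => ∫ u in (0:ℝ)..x, (1 - F u) :=
    intervalIntegral.continuous_primitive
      (fun a b => (continuous_const.sub hFcont).intervalIntegrable a b) 0
  have hTcont : ContinuousOn (fun x : ℝ => ∫ u in Ioi x, (1 - F u)) (Ici 0) := by
    refine ContinuousOn.congr (f := fun x : ℝ =>
        (∫ u in Ioi (0:ℝ), (1 - F u)) - ∫ u in (0:ℝ)..x, (1 - F u)) ?_ ?_
    · exact (continuous_const.sub hprim).continuousOn
    · exact fun x hx => hTx x hx
  have hLcont : ∀ b : ℝ, 0 ≤ b → (b : EReal) < H → ContinuousOn (Lfun F c n) (Icc 0 b) := by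
    intro b hb0 hbH
    have hpos : ∀ x ∈ Icc (0:ℝ) b, 1 - F x ≠ 0 := by
      intro x hx
      exact (hFbar x hx.1 (lt_of_le_of_lt (EReal.coe_le_coe_iff.mpr hx.2) hbH)).ne'
    refine ContinuousOn.congr (f := fun x : ℝ =>
        ((∫ u in Ioi x, (1 - F u)) - c) / (1 - F x) - x / n) ?_ (fun x _ => hLformula x)
    refine ContinuousOn.sub ?_ (Continuous.continuousOn (continuous_id.div_const _))
    exact ContinuousOn.div
      (((hTcont.mono (fun x hx => hx.1)).sub continuousOn_const))
      ((continuous_const.sub hFcont).continuousOn) hpos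
  -- tendsto atBot, by cases on H
  have hmain : Tendsto (Lfun F c n) (Filter.comap (fun x : ℝ => (x : EReal)) (𝓝[<] H)) atBot ∧
      (Filter.comap (fun x : ℝ => (x : EReal)) (𝓝[<] H)).NeBot := by
    induction H using EReal.rec with
    | bot => exact absurd hH (by simp)
    | coe r =>
      have hr : 0 < r := by exact_mod_cast hH
      have hcomap : Filter.comap (fun x : ℝ => (x : EReal)) (𝓝[<] ((r:ℝ) : EReal)) = 𝓝[<] r := by
        rw [nhdsWithin, nhdsWithin, comap_inf, comap_principal, EReal.nhds_coe,
          comap_map EReal.coe_injective]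
        congr 1
        ext x
        simp [EReal.coe_lt_coe_iff]
      rw [hcomap]
      -- survival vanishes at and beyond r
      have hzero : ∀ u : ℝ, r ≤ u → 1 - F u = 0 := by
        intro u hu
        rw [hsurv]
        have : μ {ω | u < α ω} = 0 := by
          refine measure_mono_null (fun ω hω => ?_) (ae_iff.mp hvalH)
          simp only [mem_setOf_eq] at *
          intro hlt
          have : α ω < r := by exact_mod_cast hlt
          linarith
        rw [this, ENNReal.toReal_zero]
      -- tail integral bound
      have hTbound : ∀ x : ℝ, 0 ≤ x → x < r →
          (∫ u in Ioi x, (1 - F u)) ≤ (r - x) * (1 - F x) := by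
        intro x hx0 hxr
        have hIx : IntegrableOn (fun u : ℝ => 1 - F u) (Ioi x) :=
          hGint.mono_set (Ioi_subset_Ioi hx0)
        have hsplit : (∫ u in Ioi x, (1 - F u))
            = (∫ u in Ioc x r, (1 - F u)) + ∫ u in Ioi r, (1 - F u) := by
          rw [← setIntegral_union (Ioc_disjoint_Ioi le_rfl) measurableSet_Ioi
            (hIx.mono_set Ioc_subset_Ioi_self)
            (hIx.mono_set (Ioi_subset_Ioi hxr.le)), Ioc_union_Ioi_eq_Ioi hxr.le]
        have hzero2 : (∫ u in Ioi r, (1 - F u)) = 0 := by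
          rw [setIntegral_congr_fun measurableSet_Ioi (fun u hu => hzero u (le_of_lt hu))]
          simp
        have hle : (∫ u in Ioc x r, (1 - F u)) ≤ ∫ _u in Ioc x r, (1 - F x) := by
          refine setIntegral_mono_on (hIx.mono_set Ioc_subset_Ioi_self)
            (integrableOn_const (by simp)) measurableSet_Ioc ?_
          intro u hu
          have := hFmono hu.1.le
          linarith
        have hconst : (∫ _u in Ioc x r, (1 - F x)) = (r - x) * (1 - F x) := by
          rw [setIntegral_const, Real.volume_real_Ioc_of_le (by linarith)]
          simp [smul_eq_mul]
        rw [hsplit, hzero2]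
        linarith [hle, hconst.le, hconst.ge]
      -- survival tends to 0 at r from the left
      have hFr : 1 - F r = 0 := hzero r le_rfl
      have hsurvtend : Tendsto (fun x : ℝ => 1 - F x) (𝓝[<] r) (𝓝[>] 0) := by
        rw [tendsto_nhdsWithin_iff]
        constructor
        · have hc1 : Continuous fun x : ℝ => 1 - F x := continuous_const.sub hFcont
          have := (hc1.tendsto r).mono_left (nhdsWithin_le_nhds (s := Iio r))
          rwa [hFr] at this
        · filter_upwards [Ioo_mem_nhdsLT hr, self_mem_nhdsWithin] with x hx _
          exact hFbar x hx.1.le (EReal.coe_lt_coe_iff.mpr hx.2)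
      have hinvtend : Tendsto (fun x : ℝ => -(c / (1 - F x))) (𝓝[<] r) atBot := by
        refine (tendsto_neg_atTop_atBot).comp ?_
        have : Tendsto (fun x : ℝ => c * (1 - F x)⁻¹) (𝓝[<] r) atTop :=
          (tendsto_inv_nhdsGT_zero.comp hsurvtend).const_mul_atTop hc
        simpa [div_eq_mul_inv] using this
      have hbound : Tendsto (fun x : ℝ => r + -(c / (1 - F x))) (𝓝[<] r) atBot :=
        tendsto_atBot_add_const_left _ r hinvtend
      constructor
      · refine tendsto_atBot_mono' _ ?_ hbound
        filter_upwards [Ioo_mem_nhdsLT hr] with x hx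
        have hx0 : 0 ≤ x := hx.1.le
        have hxr : x < r := hx.2
        have hpos : 0 < 1 - F x := hFbar x hx0 (EReal.coe_lt_coe_iff.mpr hxr)
        have h1 : mrd F x ≤ r - x := by
          rw [mrd, div_le_iff₀ hpos]
          exact hTbound x hx0 hxr
        have h2 : 0 ≤ x / n := div_nonneg hx0 hnpos.le
        rw [Lfun]
        linarith [h1, h2]
      · infer_instance
    | top =>
      have hcomap : Filter.comap (fun x : ℝ => (x : EReal)) (𝓝[<] (⊤ : EReal)) = atTop := by
        have hIio : Iio (⊤ : EReal) = {(⊤ : EReal)}ᶜ := by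
          ext x; simp [lt_top_iff_ne_top]
        have : 𝓝[<] (⊤ : EReal) = 𝓝[≠] (⊤ : EReal) := by rw [nhdsWithin, hIio, nhdsWithin]
        rw [this, EReal.nhdsWithin_top, comap_map EReal.coe_injective]
      rw [hcomap]
      -- tail integral tends to 0
      have hTtend : Tendsto (fun x : ℝ => ∫ u in Ioi x, (1 - F u)) atTop (𝓝 0) := by
        have h1 : Tendsto (fun x : ℝ => ∫ u in (0:ℝ)..x, (1 - F u)) atTop
            (𝓝 (∫ u in Ioi (0:ℝ), (1 - F u))) :=
          intervalIntegral_tendsto_integral_Ioi 0 hGint tendsto_id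
        have h2 : Tendsto (fun x : ℝ =>
            (∫ u in Ioi (0:ℝ), (1 - F u)) - ∫ u in (0:ℝ)..x, (1 - F u)) atTop (𝓝 0) := by
          have := (tendsto_const_nhds (x := ∫ u in Ioi (0:ℝ), (1 - F u))
            (f := atTop (α := ℝ))).sub h1
          simpa using this
        refine h2.congr' ?_
        filter_upwards [eventually_ge_atTop (0:ℝ)] with x hx
        exact (hTx x hx).symm
      have hbound : Tendsto (fun x : ℝ => -(x / n)) atTop atBot :=
        tendsto_neg_atTop_atBot.comp (tendsto_id.atTop_div_const hnpos)
      constructor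
      · refine tendsto_atBot_mono' _ ?_ hbound
        filter_upwards [eventually_ge_atTop (0:ℝ),
          hTtend.eventually_lt_const hc] with x hx0 hxc
        have hpos : 0 < 1 - F x := hFbar x hx0 (EReal.coe_lt_top x)
        rw [hLformula x]
        have h1 : ((∫ u in Ioi x, (1 - F u)) - c) / (1 - F x) ≤ 0 :=
          div_nonpos_of_nonpos_of_nonneg (by linarith) hpos.le
        linarith
      · infer_instance
  obtain ⟨htend, hNB⟩ := hmain
  -- a point where L is negative
  have hneg : ∃ b : ℝ, 0 < b ∧ (b : EReal) < H ∧ Lfun F c n b < 0 := by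
    have h1 : ∀ᶠ x : ℝ in Filter.comap (fun x : ℝ => (x : EReal)) (𝓝[<] H), Lfun F c n x < 0 :=
      htend.eventually (eventually_lt_atBot 0)
    have h2 : ∀ᶠ x : ℝ in Filter.comap (fun x : ℝ => (x : EReal)) (𝓝[<] H),
        0 < x ∧ (x : EReal) < H := by
      have hmem : Ioi (0 : EReal) ∩ Iio H ∈ 𝓝[<] H :=
        inter_mem (nhdsWithin_le_nhds (isOpen_Ioi.mem_nhds hH)) self_mem_nhdsWithin
      have hpre : (fun x : ℝ => (x : EReal)) ⁻¹' (Ioi 0 ∩ Iio H) ∈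
          Filter.comap (fun x : ℝ => (x : EReal)) (𝓝[<] H) := preimage_mem_comap hmem
      filter_upwards [hpre] with x hx
      have hx1 : (0 : EReal) < (x : EReal) := hx.1
      exact ⟨by exact_mod_cast hx1, hx.2⟩
    obtain ⟨b, hb1, hb2, hb3⟩ := (h1.and h2).exists
    exact ⟨b, hb2, hb3, hb1⟩
  obtain ⟨b, hb0, hbH, hbneg⟩ := hneg
  refine ⟨hL0, hL0pos, htend, ?_⟩
  have hcont := hLcont b hb0.le hbH
  have hmem : (0:ℝ) ∈ Icc (Lfun F c n b) (Lfun F c n 0) := ⟨hbneg.le, hL0pos.le⟩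
  obtain ⟨x, hx, hLx⟩ := intermediate_value_Icc' hb0.le hcont hmem
  refine ⟨x, ?_, lt_of_le_of_lt (EReal.coe_le_coe_iff.mpr hx.2) hbH, hLx⟩
  rcases hx.1.lt_or_eq with h | h
  · exact h
  · exfalso; rw [← h] at hLx; rw [hLx] at hL0pos; exact lt_irrefl 0 hL0pos
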